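/- Let G be a finite group, F a field of characteristic p > 0, and P a p-subgroup of G. Then the F-span of class sums C⁺ with δ(C) strictly contained (up to G-conjugacy) in P, denoted Ĩ_G(P), is an ideal of Z(FG) contained in I_G(P). -/

import Mathlib

set_option synthInstance.maxHeartbeats 400000

set_option synthInstance.maxHeartbeats 400000

/-- The class sum `C⁺ = ∑_{x ∈ C} x` of a conjugacy class `C` of `G`. -/
noncomputable def classSum (F : Type*) [Field F] (G : Type*) [Group G] [Fintype G]
    (C : ConjClasses G) : MonoidAlgebra F G :=
  ∑ x ∈ (Set.toFinite C.carrier).toFinset, MonoidAlgebra.single x (1 : F)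

/-- `D` is a defect group of the conjugacy class `C`: a Sylow `p`-subgroup of the centralizer
`C_G(x)` of some `x ∈ C`, viewed as a subgroup of `G`. -/
def IsDefectGroup (p : ℕ) {G : Type*} [Group G] (C : ConjClasses G) (D : Subgroup G) : Prop :=
  ∃ x ∈ C.carrier, ∃ Q : Sylow p ↥(Subgroup.centralizer {x}),
    D = Subgroup.map (Subgroup.centralizer {x}).subtype Q.toSubgroup

/-- `δ(C) ≤_G P`: some defect group of `C` has a `G`-conjugate contained in `P`. -/
def DefectLE (p : ℕ) {G : Type*} [Group G] (C : ConjClasses G) (P : Subgroup G) : Prop :=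
  ∃ D : Subgroup G, IsDefectGroup p C D ∧
    ∃ g : G, Subgroup.map (MulAut.conj g).toMonoidHom D ≤ P

/-- The `F`-span `I_G(P)` of the class sums `C⁺` with `δ(C) ≤_G P`. -/
noncomputable def IGP (F : Type*) [Field F] (p : ℕ) (G : Type*) [Group G] [Fintype G]
    (P : Subgroup G) : Submodule F (MonoidAlgebra F G) :=
  Submodule.span F {z | ∃ C : ConjClasses G, DefectLE p C P ∧ z = classSum F G C}

/-- `δ(C) <_G P`: some defect group of `C` has a `G`-conjugate properly contained in `P`. -/
def DefectLT (p : ℕ) {G : Type*} [Group G] (C : ConjClasses G) (P : Subgroup G) : Prop :=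
  ∃ D : Subgroup G, IsDefectGroup p C D ∧
    ∃ g : G, Subgroup.map (MulAut.conj g).toMonoidHom D < P

/-- The `F`-span `Ĩ_G(P)` of the class sums `C⁺` with `δ(C) <_G P`. -/
noncomputable def IGPlt (F : Type*) [Field F] (p : ℕ) (G : Type*) [Group G] [Fintype G]
    (P : Subgroup G) : Submodule F (MonoidAlgebra F G) :=
  Submodule.span F {z | ∃ C : ConjClasses G, DefectLT p C P ∧ z = classSum F G C}

section Aux

variable {F : Type*} [Field F] {G : Type*} [Group G] [Fintype G] {p : ℕ}

lemma mem_classFinset {C : ConjClasses G} {x : G} :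
    x ∈ (Set.toFinite C.carrier).toFinset ↔ ConjClasses.mk x = C := by
  simp [ConjClasses.mem_carrier_iff_mk_eq]

open scoped Classical in
lemma classSum_apply (C : ConjClasses G) (g : G) :
    (classSum F G C).coeff g = if ConjClasses.mk g = C then 1 else 0 := by
  classical
  rw [classSum, MonoidAlgebra.coeff_sum]
  rw [Finset.sum_apply']
  simp_rw [MonoidAlgebra.coeff_single, Finsupp.single_apply]
  rw [Finset.sum_ite_eq' _ g (fun _ => (1:F))]
  exact if_congr mem_classFinset rfl rfl

lemma conj_mem_classFinset {C : ConjClasses G} {x : G} (g : G)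
    (h : x ∈ (Set.toFinite C.carrier).toFinset) :
    g * x * g⁻¹ ∈ (Set.toFinite C.carrier).toFinset := by
  rw [mem_classFinset] at *
  rw [← h]
  exact ConjClasses.mk_eq_mk_iff_isConj.2 (isConj_iff.2 ⟨g, rfl⟩).symm

lemma classSum_mem_center (C : ConjClasses G) :
    classSum F G C ∈ Subalgebra.center F (MonoidAlgebra F G) := by
  rw [Subalgebra.mem_center_iff]
  intro b
  induction b using MonoidAlgebra.induction_on with
  | of g =>
      show MonoidAlgebra.single g 1 * _ = _ * MonoidAlgebra.single g 1
      rw [classSum, Finset.mul_sum, Finset.sum_mul]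
      simp_rw [MonoidAlgebra.single_mul_single, one_mul]
      refine Finset.sum_nbij' (fun x => g * x * g⁻¹) (fun x => g⁻¹ * x * g) ?_ ?_ ?_ ?_ ?_
      · intro a ha; exact conj_mem_classFinset g ha
      · intro a ha
        have := conj_mem_classFinset g⁻¹ ha
        simpa using this
      · intro a _; group
      · intro a _; group
      · intro a _
        congr 1
        group
  | add f g hf hg => rw [add_mul, mul_add, hf, hg]
  | smul r f hf => rw [smul_mul_assoc, mul_smul_comm, hf]

lemma center_coeff_conj {a : MonoidAlgebra F G}
    (ha : a ∈ Subalgebra.center F (MonoidAlgebra F G)) (g x : G) :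
    a.coeff (g * x * g⁻¹) = a.coeff x := by
  have h := (Subalgebra.mem_center_iff.1 ha (MonoidAlgebra.single g 1))
  have h2 := congrArg (fun z : MonoidAlgebra F G => z.coeff (g * x)) h
  rw [MonoidAlgebra.coeff_single_mul_apply, MonoidAlgebra.coeff_mul_single_apply] at h2
  simp only [one_mul, mul_one] at h2
  have e1 : g⁻¹ * (g * x) = x := by group
  rw [e1] at h2
  exact h2.symm

lemma mk_out_conj (C : ConjClasses G) : ConjClasses.mk (Quotient.out C) = C := by
  rw [← ConjClasses.quotient_mk_eq_mk]
  exact Quotient.out_eq (s := IsConj.setoid G) C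

open scoped Classical in
lemma central_eq_sum (z : MonoidAlgebra F G)
    (hz : z ∈ Subalgebra.center F (MonoidAlgebra F G)) :
    z = ∑ C : ConjClasses G, z.coeff (Quotient.out C) • classSum F G C := by
  ext g
  rw [MonoidAlgebra.coeff_sum, Finset.sum_apply']
  have hterm : ∀ C : ConjClasses G, (z.coeff (Quotient.out C) • classSum F G C).coeff g
      = if ConjClasses.mk g = C then z.coeff (Quotient.out C) else 0 := by
    intro C
    rw [MonoidAlgebra.coeff_smul_apply, classSum_apply, smul_eq_mul, mul_ite, mul_one, mul_zero]
  rw [Finset.sum_congr rfl (fun C _ => hterm C)]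
  rw [Finset.sum_ite_eq _ (ConjClasses.mk g) (fun C => z.coeff (Quotient.out C))]
  rw [if_pos (Finset.mem_univ _)]
  obtain ⟨c, hc⟩ :=
    isConj_iff.1 (ConjClasses.mk_eq_mk_iff_isConj.1 (mk_out_conj (ConjClasses.mk g))).symm
  rw [← hc, center_coeff_conj hz]

lemma sum_eq_zero_of_no_fixed [Fact p.Prime] [CharP F p]
    (Q : Subgroup G) (hQ : IsPGroup p ↥Q) (f : G → F)
    (hf : ∀ q ∈ Q, ∀ d : G, f (q * d * q⁻¹) = f d)
    (S : Finset G) (hS : ∀ q ∈ Q, ∀ d ∈ S, q * d * q⁻¹ ∈ S)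
    (hfix : ∀ d ∈ S, ∃ q ∈ Q, q * d * q⁻¹ ≠ d) :
    ∑ d ∈ S, f d = 0 := by
  classical
  letI act : MulAction ↥Q G :=
    { smul := fun q g => (q : G) * g * (q : G)⁻¹
      one_smul := fun g => by show (1:G) * g * (1:G)⁻¹ = g; group
      mul_smul := fun q r g => by
        show ((q*r : ↥Q) : G) * g * ((q*r : ↥Q) : G)⁻¹
            = (q:G) * ((r:G) * g * (r:G)⁻¹) * (q:G)⁻¹
        push_cast
        group }
  have smul_def : ∀ (q : ↥Q) (g : G), q • g = (q : G) * g * (q : G)⁻¹ := fun _ _ => rfl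
  induction S using Finset.strongInduction with
  | _ S ih =>
    rcases S.eq_empty_or_nonempty with rfl | ⟨d, hd⟩
    · simp
    · set O : Finset G := Finset.image (fun q : ↥Q => q • d) Finset.univ with hO
      have hdO : d ∈ O := Finset.mem_image.2 ⟨1, Finset.mem_univ _, by
        rw [smul_def]; simp⟩
      have hOS : O ⊆ S := by
        intro y hy
        obtain ⟨q, -, rfl⟩ := Finset.mem_image.1 hy
        exact hS q q.2 d hd
      have hfO : ∀ y ∈ O, f y = f d := by
        intro y hy
        obtain ⟨q, -, rfl⟩ := Finset.mem_image.1 hy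
        rw [smul_def]
        exact hf q q.2 d
      have horb : MulAction.orbit ↥Q d = (O : Set G) := by
        ext y
        simp [MulAction.mem_orbit_iff, hO, eq_comm]
      have h1 : Nat.card (MulAction.orbit ↥Q d) = O.card := by
        rw [horb, Nat.card_coe_set_eq, Set.ncard_coe_finset]
      have h2 : Nat.card (MulAction.orbit ↥Q d)
          = Nat.card (↥Q ⧸ MulAction.stabilizer ↥Q d) :=
        Nat.card_congr (MulAction.orbitEquivQuotientStabilizer ↥Q d)
      have hpO : (p : ℕ) ∣ O.card := by
        have h3 : Nat.card (↥Q ⧸ MulAction.stabilizer ↥Q d) ∣ Nat.card ↥Q :=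
          ⟨Nat.card (MulAction.stabilizer ↥Q d),
            Subgroup.card_eq_card_quotient_mul_card_subgroup _⟩
        obtain ⟨n, hn⟩ := IsPGroup.iff_card.1 hQ
        rw [hn] at h3
        obtain ⟨m, hm, hcard⟩ := (Nat.dvd_prime_pow (Fact.out : p.Prime)).1 h3
        have hm1 : m ≠ 0 := by
          intro h
          subst h
          have hO1 : O.card = 1 := by rw [← h1, h2, hcard, pow_zero]
          obtain ⟨a, ha⟩ := Finset.card_eq_one.1 hO1
          obtain ⟨q, hq, hqd⟩ := hfix d hd
          have hqO : q * d * q⁻¹ ∈ O :=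
            Finset.mem_image.2 ⟨⟨q, hq⟩, Finset.mem_univ _, rfl⟩
          rw [ha, Finset.mem_singleton] at hdO hqO
          exact hqd (hqO.trans hdO.symm)
        rw [← h1, h2, hcard]
        exact dvd_pow_self p hm1
      have hOsum : ∑ y ∈ O, f y = 0 := by
        rw [Finset.sum_congr rfl hfO, Finset.sum_const, nsmul_eq_mul,
          (CharP.cast_eq_zero_iff F p O.card).2 hpO, zero_mul]
      have hrest : ∑ y ∈ S \ O, f y = 0 := by
        refine ih (S \ O) (Finset.sdiff_ssubset hOS ⟨d, hdO⟩) ?_ ?_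
        · intro q hq x hx
          rcases Finset.mem_sdiff.1 hx with ⟨hxS, hxO⟩
          refine Finset.mem_sdiff.2 ⟨hS q hq x hxS, fun hmem => hxO ?_⟩
          obtain ⟨r, -, hr⟩ := Finset.mem_image.1 hmem
          refine Finset.mem_image.2 ⟨(⟨q, hq⟩ : ↥Q)⁻¹ * r, Finset.mem_univ _, ?_⟩
          rw [smul_def] at hr ⊢
          push_cast at hr ⊢
          have e : q⁻¹ * ↑r * d * (q⁻¹ * ↑r)⁻¹ = q⁻¹ * (↑r * d * (↑r)⁻¹) * q := by group
          rw [e, hr]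
          group
        · intro x hx; exact hfix x (Finset.mem_sdiff.1 hx).1
      rw [← Finset.sum_sdiff hOS, hrest, hOsum, add_zero]

variable [Fact p.Prime]

lemma conj_map_comp (a b : G) (K : Subgroup G) :
    Subgroup.map (MulAut.conj a).toMonoidHom (Subgroup.map (MulAut.conj b).toMonoidHom K)
      = Subgroup.map (MulAut.conj (a * b)).toMonoidHom K := by
  rw [Subgroup.map_map]
  congr 1
  ext x
  simp [MulAut.conj_apply, mul_assoc]

lemma map_subtype_smul_sylow {H : Subgroup G} (u : ↥H) (R : Sylow p ↥H) :
    Subgroup.map H.subtype (u • R : Sylow p ↥H).toSubgroup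
      = Subgroup.map (MulAut.conj (u : G)).toMonoidHom (Subgroup.map H.subtype R.toSubgroup) := by
  ext y
  simp only [Subgroup.mem_map, Sylow.smul_def, Sylow.pointwise_smul_def]
  constructor
  · rintro ⟨h, hh, rfl⟩
    rw [Subgroup.mem_pointwise_smul_iff_inv_smul_mem] at hh
    refine ⟨((MulAut.conj u)⁻¹ h : ↥H), ⟨(MulAut.conj u)⁻¹ h, hh, rfl⟩, ?_⟩
    simp [MulAut.conj_apply]
    group
  · rintro ⟨g, ⟨r, hr, rfl⟩, rfl⟩
    refine ⟨(MulAut.conj u) r, ?_, ?_⟩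
    · rw [Subgroup.mem_pointwise_smul_iff_inv_smul_mem]
      have e : ((MulAut.conj u)⁻¹ : MulAut ↥H) • ((MulAut.conj u) r) = r := by
        simp only [MulAut.smul_def]
        simp
        group
      rw [e]
      exact hr
    · simp [MulAut.conj_apply]

lemma exists_conj_le_defect (D : ConjClasses G) {D0 : Subgroup G}
    (hD0 : IsDefectGroup p D D0) {K : Subgroup G} (hK : IsPGroup p ↥K)
    {d : G} (hd : d ∈ D.carrier) (hKc : K ≤ Subgroup.centralizer {d}) :
    ∃ v : G, Subgroup.map (MulAut.conj v).toMonoidHom K ≤ D0 := by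
  obtain ⟨x, hx, Q0, hD0eq⟩ := hD0
  have hconj : IsConj d x := by
    rw [ConjClasses.mem_carrier_iff_mk_eq] at hd hx
    exact ConjClasses.mk_eq_mk_iff_isConj.1 (hd.trans hx.symm)
  obtain ⟨c, hc⟩ := isConj_iff.1 hconj
  set K' := Subgroup.map (MulAut.conj c).toMonoidHom K with hK'
  have hK'H : K' ≤ Subgroup.centralizer {x} := by
    rintro - ⟨k, hk, rfl⟩
    rw [Subgroup.mem_centralizer_singleton_iff]
    have hkd : k * d = d * k := (Subgroup.mem_centralizer_singleton_iff.1 (hKc hk))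
    simp only [MulEquiv.coe_toMonoidHom, MulAut.conj_apply]
    rw [← hc]
    calc c * k * c⁻¹ * (c * d * c⁻¹) = c * (k * d) * c⁻¹ := by group
    _ = c * (d * k) * c⁻¹ := by rw [hkd]
    _ = c * d * c⁻¹ * (c * k * c⁻¹) := by group
  have hK'p : IsPGroup p ↥K' := hK.map _
  have hK''p : IsPGroup p ↥(K'.subgroupOf (Subgroup.centralizer {x})) :=
    hK'p.of_equiv (Subgroup.subgroupOfEquivOfLe hK'H).symm
  obtain ⟨R, hR⟩ := hK''p.exists_le_sylow
  obtain ⟨u, hu⟩ := MulAction.exists_smul_eq ↥(Subgroup.centralizer {x}) R Q0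
  refine ⟨(u : G) * c, ?_⟩
  rw [← conj_map_comp, hD0eq]
  have h1 : Subgroup.map (MulAut.conj (u : G)).toMonoidHom K'
      ≤ Subgroup.map (MulAut.conj (u : G)).toMonoidHom
        (Subgroup.map (Subgroup.centralizer {x}).subtype R.toSubgroup) := by
    apply Subgroup.map_mono
    have := Subgroup.map_mono (f := (Subgroup.centralizer {x}).subtype) hR
    rwa [Subgroup.subgroupOf_map_subtype, inf_eq_left.2 hK'H] at this
  rw [← map_subtype_smul_sylow, hu] at h1
  exact h1

lemma central_mul_classSum_mem [CharP F p] (P : Subgroup G)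
    {a : MonoidAlgebra F G} (ha : a ∈ Subalgebra.center F (MonoidAlgebra F G))
    {D : ConjClasses G} (hD : DefectLT p D P) :
    a * classSum F G D ∈ IGPlt F p G P := by
  classical
  set z := a * classSum F G D with hzdef
  have hzc : z ∈ Subalgebra.center F (MonoidAlgebra F G) :=
    mul_mem ha (classSum_mem_center D)
  rw [central_eq_sum z hzc]
  refine Submodule.sum_mem _ ?_
  intro C _
  by_cases h0 : z.coeff (Quotient.out C) = 0
  · rw [h0, zero_smul]; exact Submodule.zero_mem _
  · refine Submodule.smul_mem _ _ (Submodule.subset_span ?_)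
    refine ⟨C, ?_, rfl⟩
    -- set-up : e is a representative of C, Q0C a Sylow of its centralizer
    set e := Quotient.out C with he
    have heC : e ∈ C.carrier := ConjClasses.mem_carrier_iff_mk_eq.2 (mk_out_conj C)
    obtain ⟨Q0C⟩ := (Sylow.nonempty : Nonempty (Sylow p ↥(Subgroup.centralizer {e})))
    set DC := Subgroup.map (Subgroup.centralizer {e}).subtype Q0C.toSubgroup with hDC
    have hDCp : IsPGroup p ↥DC := Q0C.2.map _
    have hDCe : DC ≤ Subgroup.centralizer {e} := Subgroup.map_subtype_le _
    -- the coefficient of z at e as a sum over the class D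
    have hze : z.coeff e = ∑ d ∈ (Set.toFinite D.carrier).toFinset, a.coeff (e * d⁻¹) := by
      rw [hzdef, classSum, Finset.mul_sum, MonoidAlgebra.coeff_sum, Finset.sum_apply']
      refine Finset.sum_congr rfl ?_
      intro d _
      rw [MonoidAlgebra.coeff_mul_single_apply, mul_one]
    -- there must be a fixed point
    have hfix : ¬ (∀ d ∈ (Set.toFinite D.carrier).toFinset, ∃ q ∈ DC, q * d * q⁻¹ ≠ d) := by
      intro hno
      apply h0
      rw [hze]
      refine sum_eq_zero_of_no_fixed DC hDCp (fun g => a.coeff (e * g⁻¹)) ?_ _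
        (fun q hq d hd => conj_mem_classFinset q hd) hno
      intro q hq d
      have hqe : q * e = e * q := Subgroup.mem_centralizer_singleton_iff.1 (hDCe hq)
      have key : e * (q * d * q⁻¹)⁻¹ = q * (e * d⁻¹) * q⁻¹ := by
        have h1 : e * (q * d * q⁻¹)⁻¹ = e * q * d⁻¹ * q⁻¹ := by group
        rw [h1, ← hqe]
        group
      show a.coeff (e * (q * d * q⁻¹)⁻¹) = a.coeff (e * d⁻¹)
      rw [key, center_coeff_conj ha]
    push_neg at hfix
    obtain ⟨d, hdD, hdfix⟩ := hfix
    have hdc : DC ≤ Subgroup.centralizer {d} := by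
      intro q hq
      rw [Subgroup.mem_centralizer_singleton_iff]
      have := hdfix q hq
      calc q * d = q * d * q⁻¹ * q := by group
      _ = d * q := by rw [this]
    obtain ⟨D0, hD0, g, hg⟩ := hD
    have hdcar : d ∈ D.carrier := (Set.toFinite D.carrier).mem_toFinset.1 hdD
    obtain ⟨v, hv⟩ := exists_conj_le_defect D hD0 hDCp hdcar hdc
    refine ⟨DC, ⟨e, heC, Q0C, rfl⟩, g * v, ?_⟩
    rw [← conj_map_comp]
    exact lt_of_le_of_lt (Subgroup.map_mono hv) hg

end Aux

/-- `Ĩ_G(P)` is an ideal of the center `Z(FG)` contained in `I_G(P)`. -/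
theorem stmt_9 (F : Type*) [Field F] (p : ℕ) [Fact p.Prime] [CharP F p]
    (G : Type*) [Group G] [Fintype G] (P : Subgroup G) (hP : IsPGroup p P) :
    (∀ z ∈ IGPlt F p G P, z ∈ Subalgebra.center F (MonoidAlgebra F G)) ∧
    (∀ a ∈ Subalgebra.center F (MonoidAlgebra F G), ∀ z ∈ IGPlt F p G P,
      a * z ∈ IGPlt F p G P) ∧
    IGPlt F p G P ≤ IGP F p G P := by
  refine ⟨?_, ?_, ?_⟩
  · intro z hz
    have : IGPlt F p G P ≤ Subalgebra.toSubmodule (Subalgebra.center F (MonoidAlgebra F G)) := by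
      rw [IGPlt, Submodule.span_le]
      rintro - ⟨C, -, rfl⟩
      exact classSum_mem_center C
    exact this hz
  · intro a ha z hz
    induction hz using Submodule.span_induction with
    | mem x hx =>
        obtain ⟨C, hC, rfl⟩ := hx
        exact central_mul_classSum_mem P ha hC
    | zero => rw [mul_zero]; exact Submodule.zero_mem _
    | add x y _ _ hx hy => rw [mul_add]; exact Submodule.add_mem _ hx hy
    | smul r x _ hx => rw [mul_smul_comm]; exact Submodule.smul_mem _ _ hx
  · rw [IGPlt, Submodule.span_le]
    rintro - ⟨C, ⟨D0, hD0, g, hg⟩, rfl⟩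
    exact Submodule.subset_span ⟨C, ⟨D0, hD0, g, hg.le⟩, rfl⟩
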